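/- arXiv:2103.04091 — 3 statements merged into one kernel-verified Lean document; each statement's English description precedes it below -/
import Mathlib

section
/- Let Π be a symmetric positive definite solution of the ARE AᵀΠ + ΠA − ΠBR⁻¹BᵀΠ + Q = 0 with Q symmetric positive definite and R symmetric positive definite. Then the closed-loop matrix A − BR⁻¹BᵀΠ is Hurwitz, i.e., every eigenvalue has negative real part. -/
open Matrix

section aux
open ComplexOrder

lemma aux_map_eq {k : ℕ} (M : Matrix (Fin k) (Fin k) ℝ) :
    M.map Complex.ofReal = Complex.ofRealHom.mapMatrix M := rfl

lemma aux_posSemidef_map {k : ℕ} {M : Matrix (Fin k) (Fin k) ℝ} (hM : M.PosSemidef) :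
    (M.map (Complex.ofReal)).PosSemidef := by
  obtain ⟨S, rfl⟩ : ∃ S : Matrix (Fin k) (Fin k) ℝ, M = Sᴴ * S := by
    open MatrixOrder in
    exact ⟨CFC.sqrt M, by rw [← star_eq_conjTranspose, (IsSelfAdjoint.of_nonneg (CFC.sqrt_nonneg M)).star_eq, CFC.sqrt_mul_sqrt_self M hM.nonneg]⟩
  have : ((Sᴴ * S).map (Complex.ofReal)) = (S.map Complex.ofReal)ᴴ * (S.map Complex.ofReal) := by
    rw [aux_map_eq, _root_.map_mul]
    congr 1
    show Sᴴ.map Complex.ofReal = _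
    rw [conjTranspose_map Complex.ofReal (by intro x; simp)]
  rw [this]
  exact posSemidef_conjTranspose_mul_self _

lemma aux_posDef_map {k : ℕ} {M : Matrix (Fin k) (Fin k) ℝ} (hM : M.PosDef) :
    (M.map (Complex.ofReal)).PosDef := by
  have hps := aux_posSemidef_map hM.posSemidef
  refine ⟨hps.1, fun x hx => lt_of_le_of_ne (hps.2 x) fun h => hx ?_⟩
  have h0 : (M.map Complex.ofReal) *ᵥ x = 0 := (hps.dotProduct_mulVec_zero_iff x).mp (by convert h.symm using 1; simp [dotProduct, mulVec, Finsupp.sum_fintype, Finset.mul_sum, mul_assoc])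
  have hdet : IsUnit (M.map Complex.ofReal).det := by
    rw [aux_map_eq, ← RingHom.map_det]
    exact (Complex.ofReal_ne_zero.mpr hM.det_pos.ne').isUnit
  exact Finsupp.coe_eq_zero.mp <| mulVec_injective_iff_isUnit.mpr ((isUnit_iff_isUnit_det _).mpr hdet)
    (a₁ := x) (a₂ := 0) (by simpa using h0)

end aux

/-- A real square matrix is Hurwitz if every complex eigenvalue has
strictly negative real part. -/
def IsHurwitz {n : ℕ} (M : Matrix (Fin n) (Fin n) ℝ) : Prop :=
  ∀ μ ∈ spectrum ℂ (M.map (Complex.ofReal)), μ.re < 0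

theorem stmt_2 {n m : ℕ}
    (A Q P : Matrix (Fin n) (Fin n) ℝ) (B : Matrix (Fin n) (Fin m) ℝ)
    (R : Matrix (Fin m) (Fin m) ℝ)
    (hR : R.PosDef) (hQ : Q.PosDef) (hP : P.PosDef)
    (hARE : Aᵀ * P + P * A - P * B * R⁻¹ * Bᵀ * P + Q = 0) :
    IsHurwitz (A - B * R⁻¹ * Bᵀ * P) := by
  open ComplexOrder in
  intro μ hμ
  -- eigenvector
  rw [← AlgEquiv.spectrum_eq (Matrix.toLinAlgEquiv' (R := ℂ) (n := Fin n)),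
    ← Module.End.hasEigenvalue_iff_mem_spectrum] at hμ
  obtain ⟨v, hv⟩ := hμ.exists_hasEigenvector
  have hvne : v ≠ 0 := hv.2
  set Acl : Matrix (Fin n) (Fin n) ℝ := A - B * R⁻¹ * Bᵀ * P with hAcl
  set Mc : Matrix (Fin n) (Fin n) ℂ := Acl.map Complex.ofReal with hMc
  have heig : Mc *ᵥ v = μ • v := by
    have h := hv.apply_eq_smul
    rwa [Matrix.toLinAlgEquiv'_apply] at h
  -- Lyapunov identity
  have hPt : Pᵀ = P := hP.isHermitian.eq
  have hRt : (R⁻¹)ᵀ = R⁻¹ := by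
    rw [transpose_nonsing_inv, (show Rᵀ = R from hR.isHermitian.eq)]
  set K : Matrix (Fin n) (Fin n) ℝ := P * B * R⁻¹ * Bᵀ * P with hK
  have h0 : Aᵀ * P + P * A - (K - Q) = Aᵀ * P + P * A - K + Q := by abel
  have h1 : Aᵀ * P + P * A = K - Q := sub_eq_zero.mp (h0.trans hARE)
  have h2 : Aclᵀ * P + P * Acl + (Q + K) = (Aᵀ * P + P * A) - (K - Q) := by
    rw [hAcl, hK]
    simp only [transpose_sub, transpose_mul, transpose_transpose, hPt, hRt, sub_mul,
      mul_sub, Matrix.mul_assoc]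
    abel
  have lyap : Aclᵀ * P + P * Acl = -(Q + K) := by
    rw [h1, sub_self] at h2
    exact eq_neg_of_add_eq_zero_left h2
  -- mapped versions
  set Pc : Matrix (Fin n) (Fin n) ℂ := P.map Complex.ofReal with hPc
  set Qc : Matrix (Fin n) (Fin n) ℂ := Q.map Complex.ofReal with hQc
  set Kc : Matrix (Fin n) (Fin n) ℂ := K.map Complex.ofReal with hKc
  have hMcH : Mcᴴ = (Aclᵀ).map Complex.ofReal := by
    rw [hMc, ← conjTranspose_map Complex.ofReal (by intro x; simp)]
    rfl
  have lyapC : Mcᴴ * Pc + Pc * Mc = -(Qc + Kc) := by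
    rw [hMcH, hMc, hPc, hQc, hKc]
    have := congrArg (fun X : Matrix (Fin n) (Fin n) ℝ => X.map Complex.ofReal) lyap
    simpa only [aux_map_eq, _root_.map_mul, map_add, map_neg] using this
  -- positivity facts
  have hPcPD : Pc.PosDef := aux_posDef_map hP
  have hQcPD : Qc.PosDef := aux_posDef_map hQ
  have hKcPSD : Kc.PosSemidef := by
    have : K.PosSemidef := by
      have h1 : K = (Bᵀ * P)ᵀ * R⁻¹ * (Bᵀ * P) := by
        rw [hK, transpose_mul, transpose_transpose, hPt,
          Matrix.mul_assoc (P * B * R⁻¹) Bᵀ P]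
      rw [h1]
      exact (hR.inv.posSemidef).conjTranspose_mul_mul_same (Bᵀ * P)
    exact aux_posSemidef_map this
  -- the scalar computation
  set p : ℂ := star v ⬝ᵥ Pc *ᵥ v with hp
  have hppos : 0 < p := hPcPD.dotProduct_mulVec_pos hvne
  have key : (starRingEnd ℂ μ + μ) * p = star v ⬝ᵥ (Mcᴴ * Pc + Pc * Mc) *ᵥ v := by
    rw [add_mulVec, dotProduct_add, ← mulVec_mulVec, ← mulVec_mulVec,
      dotProduct_mulVec (star v) Mcᴴ, ← star_mulVec, heig, mulVec_smul,
      star_smul, smul_dotProduct, dotProduct_smul]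
    simp only [hp, smul_eq_mul, starRingEnd_apply]
    ring
  rw [lyapC] at key
  have hq : 0 < star v ⬝ᵥ Qc *ᵥ v := hQcPD.dotProduct_mulVec_pos hvne
  have hk : 0 ≤ star v ⬝ᵥ Kc *ᵥ v := hKcPSD.dotProduct_mulVec_nonneg v
  have key2 : (starRingEnd ℂ μ + μ) * p = -(star v ⬝ᵥ Qc *ᵥ v + star v ⬝ᵥ Kc *ᵥ v) := by
    rw [key, neg_mulVec, dotProduct_neg, add_mulVec, dotProduct_add]
  -- take real parts
  have hpim : p.im = 0 := by
    have := hppos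
    rw [Complex.lt_def] at this
    simpa using this.2.symm
  have hpre : 0 < p.re := by
    have := hppos
    rw [Complex.lt_def] at this
    simpa using this.1
  have hqre : 0 < (star v ⬝ᵥ Qc *ᵥ v).re := by
    have := hq; rw [Complex.lt_def] at this; simpa using this.1
  have hkre : 0 ≤ (star v ⬝ᵥ Kc *ᵥ v).re := by
    have := hk; rw [Complex.le_def] at this; simpa using this.1
  have hre := congrArg Complex.re key2
  simp only [Complex.add_re, Complex.mul_re, Complex.add_im, Complex.conj_re, Complex.conj_im,
    Complex.neg_re, hpim] at hre
  nlinarith [hre, hpre, hqre, hkre]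
end

section
/- If Π is a symmetric positive definite solution of the ARE with Q symmetric positive definite and R symmetric positive definite, then every solution of ẋ = (A − BR⁻¹BᵀΠ)x converges to 0 as t → ∞. -/
open Matrix Filter

lemma quad_hasDerivAt {n : ℕ} (M : Matrix (Fin n) (Fin n) ℝ) {x : ℝ → Fin n → ℝ}
    {v : Fin n → ℝ} {t : ℝ} (hx : HasDerivAt x v t) :
    HasDerivAt (fun s => x s ⬝ᵥ (M *ᵥ x s)) (v ⬝ᵥ (M *ᵥ x t) + x t ⬝ᵥ (M *ᵥ v)) t := by
  have hxi : ∀ i, HasDerivAt (fun s => x s i) (v i) t := fun i => hasDerivAt_pi.mp hx i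
  have h : HasDerivAt (fun s => ∑ i, x s i * ∑ j, M i j * x s j)
      (∑ i, (v i * ∑ j, M i j * x t j + x t i * ∑ j, M i j * v j)) t := by
    exact HasDerivAt.fun_sum fun i _ => (hxi i).mul
      (HasDerivAt.fun_sum fun j _ => (hxi j).const_mul (M i j))
  convert h using 1 <;> simp [dotProduct, mulVec, Finset.sum_add_distrib]

lemma dot_sq_le {n : ℕ} (v : Fin n → ℝ) (i : Fin n) : v i ^ 2 ≤ v ⬝ᵥ v := by
  have := Finset.single_le_sum (f := fun k => v k * v k)
    (fun k _ => mul_self_nonneg (v k)) (Finset.mem_univ i)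
  simpa [dotProduct, sq] using this

lemma dot_self_nonneg {n : ℕ} (v : Fin n → ℝ) : (0:ℝ) ≤ v ⬝ᵥ v :=
  Finset.sum_nonneg fun k _ => mul_self_nonneg (v k)

lemma quad_ub {n : ℕ} (M : Matrix (Fin n) (Fin n) ℝ) :
    ∃ C > 0, ∀ v : Fin n → ℝ, v ⬝ᵥ (M *ᵥ v) ≤ C * (v ⬝ᵥ v) := by
  refine ⟨(∑ i, ∑ j, |M i j|) + 1, by positivity, fun v => ?_⟩
  have hd : (0:ℝ) ≤ v ⬝ᵥ v := dot_self_nonneg v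
  have hterm : ∀ i j : Fin n, v i * (M i j * v j) ≤ |M i j| * (v ⬝ᵥ v) := by
    intro i j
    have hi := dot_sq_le v i
    have hj := dot_sq_le v j
    have habs : |v i * v j| ≤ v ⬝ᵥ v := abs_le.2 ⟨by nlinarith, by nlinarith⟩
    calc v i * (M i j * v j) ≤ |v i * (M i j * v j)| := le_abs_self _
      _ = |M i j| * |v i * v j| := by rw [abs_mul, abs_mul, abs_mul]; ring
      _ ≤ |M i j| * (v ⬝ᵥ v) := mul_le_mul_of_nonneg_left habs (abs_nonneg _)
  calc v ⬝ᵥ (M *ᵥ v) = ∑ i, ∑ j, v i * (M i j * v j) := by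
        simp [dotProduct, mulVec, Finset.mul_sum]
    _ ≤ ∑ i, ∑ j, |M i j| * (v ⬝ᵥ v) :=
        Finset.sum_le_sum fun i _ => Finset.sum_le_sum fun j _ => hterm i j
    _ = (∑ i, ∑ j, |M i j|) * (v ⬝ᵥ v) := by rw [Finset.sum_mul]; simp [Finset.sum_mul]
    _ ≤ ((∑ i, ∑ j, |M i j|) + 1) * (v ⬝ᵥ v) := by nlinarith

lemma dot_cont {n : ℕ} (M : Matrix (Fin n) (Fin n) ℝ) :
    Continuous (fun v : Fin n → ℝ => v ⬝ᵥ (M *ᵥ v)) := by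
  unfold dotProduct mulVec
  exact continuous_finset_sum _ fun i _ => (continuous_apply i).mul
    (continuous_finset_sum _ fun j _ => continuous_const.mul (continuous_apply j))

lemma quad_lb {n : ℕ} {M : Matrix (Fin n) (Fin n) ℝ} (hM : M.PosDef) :
    ∃ c > 0, ∀ v : Fin n → ℝ, c * (v ⬝ᵥ v) ≤ v ⬝ᵥ (M *ᵥ v) := by
  rcases Nat.eq_zero_or_pos n with hn | hn
  · refine ⟨1, one_pos, fun v => ?_⟩
    subst hn
    simp [dotProduct]
  · set S : Set (Fin n → ℝ) := {v | v ⬝ᵥ v = 1} with hS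
    have hcont : Continuous (fun v : Fin n → ℝ => v ⬝ᵥ v) := by
      simpa using dot_cont (1 : Matrix (Fin n) (Fin n) ℝ)
    have hclosed : IsClosed S := isClosed_eq hcont continuous_const
    have hbdd : Bornology.IsBounded S := by
      rw [Metric.isBounded_iff_subset_closedBall 0]
      refine ⟨1, fun v hv => ?_⟩
      rw [Metric.mem_closedBall, dist_zero_right]
      rw [pi_norm_le_iff_of_nonneg zero_le_one]
      intro i
      have h1 : v i ^ 2 ≤ 1 := by
        have := Finset.single_le_sum (f := fun k => v k * v k)
          (fun k _ => mul_self_nonneg (v k)) (Finset.mem_univ i)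
        have hv1 : (∑ k, v k * v k) = 1 := hv
        rw [hv1] at this; simpa [sq] using this
      have h2 : v i * v i ≤ 1 := by rw [← pow_two]; exact h1
      have := abs_le_one_iff_mul_self_le_one.2 h2
      simpa using this
    have hcomp : IsCompact S := Metric.isCompact_of_isClosed_isBounded hclosed hbdd
    have hne : S.Nonempty := by
      refine ⟨Pi.single ⟨0, hn⟩ 1, ?_⟩
      simp [hS, dotProduct, Pi.single_apply]
    obtain ⟨v₀, hv₀S, hmin⟩ := hcomp.exists_isMinOn hne (dot_cont M).continuousOn
    have hv₀ne : v₀ ≠ 0 := by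
      intro h
      rw [hS, Set.mem_setOf_eq, h] at hv₀S
      simp at hv₀S
    have hc : 0 < v₀ ⬝ᵥ (M *ᵥ v₀) := by
      have := hM.dotProduct_mulVec_pos hv₀ne
      simpa using this
    refine ⟨v₀ ⬝ᵥ (M *ᵥ v₀), hc, fun v => ?_⟩
    by_cases hv : v = 0
    · simp [hv]
    · have hvv : 0 < v ⬝ᵥ v := by
        have h0 : (0:ℝ) ≤ v ⬝ᵥ v := dot_self_nonneg v
        have hne0 : v ⬝ᵥ v ≠ 0 := fun h => hv (dotProduct_self_eq_zero.mp h)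
        exact lt_of_le_of_ne h0 (Ne.symm hne0)
      set r : ℝ := Real.sqrt (v ⬝ᵥ v) with hr
      have hrpos : 0 < r := Real.sqrt_pos.2 hvv
      have hr2 : r ^ 2 = v ⬝ᵥ v := Real.sq_sqrt hvv.le
      set u : Fin n → ℝ := r⁻¹ • v with hu
      have huS : u ∈ S := by
        rw [hS, Set.mem_setOf_eq, hu, smul_dotProduct, dotProduct_smul]
        field_simp
        rw [← hr2]; ring_nf; rw [← mul_pow, mul_inv_cancel₀ hrpos.ne', one_pow]
      have hmin' := hmin huS
      have hq : u ⬝ᵥ (M *ᵥ u) = r⁻¹ ^ 2 * (v ⬝ᵥ (M *ᵥ v)) := by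
        rw [hu, smul_dotProduct, mulVec_smul, dotProduct_smul]
        simp [smul_eq_mul]; ring
      have h1 : v₀ ⬝ᵥ (M *ᵥ v₀) ≤ r⁻¹ ^ 2 * (v ⬝ᵥ (M *ᵥ v)) := by
        rw [← hq]; exact hmin'
      have hrr : r⁻¹ ^ 2 * (v ⬝ᵥ v) = 1 := by
        rw [← hr2]; field_simp
      have h3 := mul_le_mul_of_nonneg_right h1 hvv.le
      have heq : r⁻¹ ^ 2 * (v ⬝ᵥ (M *ᵥ v)) * (v ⬝ᵥ v) = v ⬝ᵥ (M *ᵥ v) := by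
        calc r⁻¹ ^ 2 * (v ⬝ᵥ (M *ᵥ v)) * (v ⬝ᵥ v)
            = (v ⬝ᵥ (M *ᵥ v)) * (r⁻¹ ^ 2 * (v ⬝ᵥ v)) := by ring
          _ = v ⬝ᵥ (M *ᵥ v) := by rw [hrr, mul_one]
      linarith

theorem stmt_5 {n m : ℕ}
    (A Q P : Matrix (Fin n) (Fin n) ℝ) (B : Matrix (Fin n) (Fin m) ℝ)
    (R : Matrix (Fin m) (Fin m) ℝ)
    (hQ : Q.PosDef) (hR : R.PosDef) (hP : P.PosDef)
    (hARE : Aᵀ * P + P * A - P * B * R⁻¹ * Bᵀ * P + Q = 0)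
    (x : ℝ → Fin n → ℝ)
    (hx : ∀ t, HasDerivAt x ((A - B * R⁻¹ * Bᵀ * P) *ᵥ x t) t) :
    Tendsto x atTop (nhds 0) := by
  have hPt : Pᵀ = P := by
    rw [← conjTranspose_eq_transpose_of_trivial]; exact hP.1
  have hRt : Rᵀ = R := by
    rw [← conjTranspose_eq_transpose_of_trivial]; exact hR.1
  have hRinvT : (R⁻¹)ᵀ = R⁻¹ := by rw [transpose_nonsing_inv, hRt]
  set Ac := A - B * R⁻¹ * Bᵀ * P with hAc
  have hT : Acᵀ = Aᵀ - P * B * R⁻¹ * Bᵀ := by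
    simp [hAc, transpose_sub, transpose_mul, hPt, hRinvT, Matrix.mul_assoc]
  have key : Acᵀ * P + P * Ac = -(Q + P * B * R⁻¹ * Bᵀ * P) := by
    rw [hT, hAc]
    have hQeq : Q = -(Aᵀ * P + P * A - P * B * R⁻¹ * Bᵀ * P) :=
      (neg_eq_of_add_eq_zero_right hARE).symm
    rw [hQeq, sub_mul, mul_sub]
    simp only [Matrix.mul_assoc]
    abel
  have hSpsd : (P * B * R⁻¹ * Bᵀ * P).PosSemidef := by
    have h := (hR.inv.posSemidef).conjTranspose_mul_mul_same (Bᵀ * P)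
    have hct : (Bᵀ * P)ᴴ = P * B := by
      rw [conjTranspose_eq_transpose_of_trivial, transpose_mul, transpose_transpose, hPt]
    rw [hct] at h
    rw [show P * B * R⁻¹ * Bᵀ * P = P * B * R⁻¹ * (Bᵀ * P) from Matrix.mul_assoc _ _ _]
    exact h
  obtain ⟨cq, hcq, hQlb⟩ := quad_lb hQ
  obtain ⟨cp, hcp, hPlb⟩ := quad_lb hP
  obtain ⟨Cp, hCp, hPub⟩ := quad_ub P
  set k : ℝ := cq / Cp with hk
  have hkpos : 0 < k := div_pos hcq hCp
  set V : ℝ → ℝ := fun t => x t ⬝ᵥ (P *ᵥ x t) with hV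
  set D : ℝ → ℝ := fun t => (Ac *ᵥ x t) ⬝ᵥ (P *ᵥ x t) + x t ⬝ᵥ (P *ᵥ (Ac *ᵥ x t)) with hD
  have hVd : ∀ t, HasDerivAt V (D t) t := fun t => quad_hasDerivAt P (hx t)
  have hVnn : ∀ t, 0 ≤ V t := fun t => by
    simpa using hP.posSemidef.dotProduct_mulVec_nonneg (x t)
  have hDle : ∀ t, D t ≤ -(k * V t) := by
    intro t
    have hflip : ∀ u : Fin n → ℝ, (Ac *ᵥ u) ⬝ᵥ (P *ᵥ u) = u ⬝ᵥ (Acᵀ *ᵥ (P *ᵥ u)) :=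
      fun u => by rw [dotProduct_mulVec u Acᵀ, vecMul_transpose]
    set u := x t with hu
    have hDeq : D t = u ⬝ᵥ ((Acᵀ * P + P * Ac) *ᵥ u) := by
      rw [hD]
      simp only [add_mulVec, dotProduct_add, ← mulVec_mulVec]
      rw [hflip (x t)]
    have hDeq2 : D t = -(u ⬝ᵥ (Q *ᵥ u)) - u ⬝ᵥ ((P * B * R⁻¹ * Bᵀ * P) *ᵥ u) := by
      rw [hDeq, key, neg_mulVec, add_mulVec, dotProduct_neg, dotProduct_add]
      ring
    have hS0 : 0 ≤ u ⬝ᵥ ((P * B * R⁻¹ * Bᵀ * P) *ᵥ u) := by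
      simpa using hSpsd.dotProduct_mulVec_nonneg u
    have hQb : cq * (u ⬝ᵥ u) ≤ u ⬝ᵥ (Q *ᵥ u) := hQlb u
    have hPb : u ⬝ᵥ (P *ᵥ u) ≤ Cp * (u ⬝ᵥ u) := hPub u
    have hkV : k * V t ≤ cq * (u ⬝ᵥ u) := by
      have : k * (u ⬝ᵥ (P *ᵥ u)) ≤ k * (Cp * (u ⬝ᵥ u)) :=
        mul_le_mul_of_nonneg_left hPb hkpos.le
      have hkc : k * Cp = cq := div_mul_cancel₀ cq (ne_of_gt hCp)
      calc k * V t = k * (u ⬝ᵥ (P *ᵥ u)) := rfl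
        _ ≤ k * (Cp * (u ⬝ᵥ u)) := this
        _ = cq * (u ⬝ᵥ u) := by rw [← mul_assoc, hkc]
    rw [hDeq2]
    linarith
  set W : ℝ → ℝ := fun t => V t * Real.exp (k * t) with hW
  have hWd : ∀ t, HasDerivAt W ((D t + k * V t) * Real.exp (k * t)) t := by
    intro t
    have he : HasDerivAt (fun s => Real.exp (k * s)) (Real.exp (k * t) * k) t := by
      simpa using (HasDerivAt.exp ((hasDerivAt_id t).const_mul k))
    have h := (hVd t).mul he
    rw [show (D t + k * V t) * Real.exp (k * t) = D t * Real.exp (k * t) + V t * (Real.exp (k * t) * k) by ring]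
    exact h
  have hWanti : Antitone W := by
    refine antitone_of_hasDerivAt_nonpos hWd fun t => ?_
    have h1 : D t + k * V t ≤ 0 := by linarith [hDle t]
    exact mul_nonpos_of_nonpos_of_nonneg h1 (Real.exp_pos _).le
  have hVle : ∀ t : ℝ, 0 ≤ t → V t ≤ V 0 * Real.exp (-(k * t)) := by
    intro t ht
    have hWt : V t * Real.exp (k * t) ≤ V 0 := by
      have := hWanti ht
      simpa [hW] using this
    have h2 : V t ≤ V 0 / Real.exp (k * t) := (le_div_iff₀ (Real.exp_pos _)).2 hWt
    rw [Real.exp_neg]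
    rw [div_eq_mul_inv] at h2
    exact h2
  have hVto : Tendsto V atTop (nhds 0) := by
    have hg : Tendsto (fun t : ℝ => V 0 * Real.exp (-(k * t))) atTop (nhds 0) := by
      have h1 : Tendsto (fun t : ℝ => k * t) atTop atTop :=
        Tendsto.const_mul_atTop hkpos tendsto_id
      have h2 : Tendsto (fun t : ℝ => Real.exp (-(k * t))) atTop (nhds 0) :=
        Real.tendsto_exp_neg_atTop_nhds_zero.comp h1
      simpa using h2.const_mul (V 0)
    refine squeeze_zero' (Eventually.of_forall hVnn) ?_ hg
    filter_upwards [eventually_ge_atTop (0:ℝ)] with t ht using hVle t ht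
  have hxxto : Tendsto (fun t => x t ⬝ᵥ x t) atTop (nhds 0) := by
    have hub : ∀ t, x t ⬝ᵥ x t ≤ cp⁻¹ * V t := by
      intro t
      have h1 := hPlb (x t)
      have h2 : x t ⬝ᵥ x t ≤ V t / cp := (le_div_iff₀' hcp).2 h1
      rwa [div_eq_inv_mul] at h2
    have hg : Tendsto (fun t => cp⁻¹ * V t) atTop (nhds 0) := by
      simpa using hVto.const_mul cp⁻¹
    exact squeeze_zero' (Eventually.of_forall fun t => dot_self_nonneg (x t))
      (Eventually.of_forall hub) hg
  rw [tendsto_zero_iff_norm_tendsto_zero]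
  have hsqrt : Tendsto (fun t => Real.sqrt (x t ⬝ᵥ x t)) atTop (nhds 0) := by
    have := (Real.continuous_sqrt.tendsto 0).comp hxxto
    simpa [Function.comp_def] using this
  refine squeeze_zero (fun t => norm_nonneg _) (fun t => ?_) hsqrt
  rw [pi_norm_le_iff_of_nonneg (Real.sqrt_nonneg _)]
  intro i
  have h1 : |x t i| = Real.sqrt ((x t i) ^ 2) := (Real.sqrt_sq_eq_abs _).symm
  rw [Real.norm_eq_abs, h1]
  exact Real.sqrt_le_sqrt (dot_sq_le (x t) i)
end

section
/- If both Π₁ and Π₂ are symmetric solutions of the ARE with S = BR⁻¹Bᵀ, and both closed-loop matrices A − SΠ₁ and A − SΠ₂ are Hurwitz, then Π₁ = Π₂ (uniqueness of the stabilizing solution). -/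
open Matrix Polynomial

lemma mem_spectrum_iff_root_charpoly {n : ℕ} (M : Matrix (Fin n) (Fin n) ℂ) (μ : ℂ) :
    μ ∈ spectrum ℂ M ↔ M.charpoly.IsRoot μ := by
  rw [spectrum.mem_iff, Matrix.isUnit_iff_isUnit_det, isUnit_iff_ne_zero, not_not,
    Polynomial.IsRoot, Matrix.charpoly, _root_.eval_det, matPolyEquiv_charmatrix]
  simp only [eval_sub, eval_X, eval_C]
  have hsc : (Matrix.scalar (Fin n)) μ = (algebraMap ℂ (Matrix (Fin n) (Fin n) ℂ)) μ := by
    ext i j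
    simp [Matrix.scalar_apply, Matrix.algebraMap_matrix_apply, Matrix.diagonal]
  rw [hsc]

lemma spectrum_transpose {n : ℕ} (M : Matrix (Fin n) (Fin n) ℂ) :
    spectrum ℂ Mᵀ = spectrum ℂ M := by
  ext μ
  rw [spectrum.mem_iff, spectrum.mem_iff]
  have h : (algebraMap ℂ (Matrix (Fin n) (Fin n) ℂ)) μ - Mᵀ
      = ((algebraMap ℂ (Matrix (Fin n) (Fin n) ℂ)) μ - M)ᵀ := by
    rw [Matrix.transpose_sub]
    congr 1
    ext i j
    simp [Matrix.algebraMap_matrix_apply, eq_comm]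
  rw [h, Matrix.isUnit_iff_isUnit_det, Matrix.det_transpose, ← Matrix.isUnit_iff_isUnit_det]

lemma mem_spectrum_neg_iff {n : ℕ} (M : Matrix (Fin n) (Fin n) ℂ) (μ : ℂ) :
    μ ∈ spectrum ℂ (-M) ↔ -μ ∈ spectrum ℂ M := by
  rw [spectrum.mem_iff, spectrum.mem_iff]
  have h : (algebraMap ℂ (Matrix (Fin n) (Fin n) ℂ)) μ - (-M)
      = -((algebraMap ℂ (Matrix (Fin n) (Fin n) ℂ)) (-μ) - M) := by
    simp [sub_eq_add_neg]
    abel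
  rw [h, IsUnit.neg_iff]

lemma sylvester_zero {n : ℕ} (M N Δ : Matrix (Fin n) (Fin n) ℂ)
    (h : M * Δ = Δ * N)
    (hdisj : ∀ μ ∈ spectrum ℂ M, μ ∉ spectrum ℂ N) : Δ = 0 := by
  rcases Nat.eq_zero_or_pos n with hn | hn
  · subst hn
    exact Subsingleton.elim _ _
  have hpow : ∀ k : ℕ, M ^ k * Δ = Δ * N ^ k := by
    intro k
    induction k with
    | zero => simp
    | succ k ih =>
      rw [pow_succ, pow_succ, mul_assoc, h, ← mul_assoc, ih, mul_assoc]
  have hcomm : ∀ p : ℂ[X], (aeval M p) * Δ = Δ * (aeval N p) := by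
    intro p
    induction p using Polynomial.induction_on' with
    | add p q hp hq => rw [map_add, map_add, add_mul, mul_add, hp, hq]
    | monomial k a =>
      rw [aeval_monomial, aeval_monomial, mul_assoc, hpow, ← mul_assoc,
        Algebra.commutes a Δ, mul_assoc]
  have hzero : (aeval M N.charpoly) * Δ = 0 := by
    rw [hcomm, Matrix.aeval_self_charpoly, mul_zero]
  have hunit : IsUnit (aeval M N.charpoly) := by
    rw [← spectrum.zero_notMem_iff ℂ]
    intro h0
    rw [spectrum.map_polynomial_aeval_of_degree_pos M N.charpoly ?_] at h0
    · obtain ⟨μ, hμ, hev⟩ := h0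
      exact hdisj μ hμ ((mem_spectrum_iff_root_charpoly N μ).mpr hev)
    · rw [Matrix.charpoly_degree_eq_dim]
      simpa using hn
  obtain ⟨u, hu⟩ := hunit
  have hcancel : (u⁻¹ : (Matrix (Fin n) (Fin n) ℂ)ˣ).val * (u.val * Δ) = Δ := by
    rw [← mul_assoc, Units.inv_mul, one_mul]
  rw [← hcancel, hu, hzero, mul_zero]

open Matrix

theorem stmt_16 {n : ℕ}
    (A Q S P₁ P₂ : Matrix (Fin n) (Fin n) ℝ)
    (hS : Sᵀ = S) (hP₁ : P₁ᵀ = P₁) (hP₂ : P₂ᵀ = P₂)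
    (hARE₁ : Aᵀ * P₁ + P₁ * A - P₁ * S * P₁ + Q = 0)
    (hARE₂ : Aᵀ * P₂ + P₂ * A - P₂ * S * P₂ + Q = 0)
    (hH₁ : IsHurwitz (A - S * P₁)) (hH₂ : IsHurwitz (A - S * P₂)) :
    P₁ = P₂ := by
  have key : (A - S * P₁)ᵀ * (P₁ - P₂) + (P₁ - P₂) * (A - S * P₂) = 0 := by
    have ht : (A - S * P₁)ᵀ = Aᵀ - P₁ * S := by
      rw [Matrix.transpose_sub, Matrix.transpose_mul, hS, hP₁]
    rw [ht]
    have : (Aᵀ - P₁ * S) * (P₁ - P₂) + (P₁ - P₂) * (A - S * P₂) =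
        (Aᵀ * P₁ + P₁ * A - P₁ * S * P₁ + Q) - (Aᵀ * P₂ + P₂ * A - P₂ * S * P₂ + Q) := by
      noncomm_ring
    rw [this, hARE₁, hARE₂, sub_zero]
  -- move to ℂ
  let f : Matrix (Fin n) (Fin n) ℝ →+* Matrix (Fin n) (Fin n) ℂ :=
    Complex.ofRealHom.mapMatrix
  set M : Matrix (Fin n) (Fin n) ℂ := ((A - S * P₁).map Complex.ofReal)ᵀ with hM
  set N : Matrix (Fin n) (Fin n) ℂ := -((A - S * P₂).map Complex.ofReal) with hN
  set Δ : Matrix (Fin n) (Fin n) ℂ := (P₁ - P₂).map Complex.ofReal with hΔ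
  have hrel : M * Δ = Δ * N := by
    have key2 : (A - S * P₁)ᵀ * (P₁ - P₂) = -((P₁ - P₂) * (A - S * P₂)) :=
      eq_neg_of_add_eq_zero_left key
    have h3 := congrArg f key2
    rw [_root_.map_mul, map_neg, _root_.map_mul] at h3
    simp only [f, RingHom.mapMatrix_apply] at h3
    rw [hM, hN, hΔ, mul_neg]
    have htr : ((A - S * P₁)ᵀ).map (⇑Complex.ofRealHom)
        = ((A - S * P₁).map Complex.ofReal)ᵀ := by
      rw [← Matrix.transpose_map]
      rfl
    rw [htr] at h3
    exact h3
  have hdisj : ∀ μ ∈ spectrum ℂ M, μ ∉ spectrum ℂ N := by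
    intro μ hμM hμN
    rw [hM, spectrum_transpose] at hμM
    rw [hN, mem_spectrum_neg_iff] at hμN
    have h1 := hH₁ μ hμM
    have h2 := hH₂ (-μ) hμN
    rw [Complex.neg_re] at h2
    linarith
  have hΔ0 : Δ = 0 := sylvester_zero M N Δ hrel hdisj
  have : P₁ - P₂ = 0 := by
    have hinj : Function.Injective (Complex.ofReal : ℝ → ℂ) := Complex.ofReal_injective
    apply Matrix.map_injective hinj
    simpa using hΔ0
  exact sub_eq_zero.mp this
end
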